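/- Let G, Λ ∈ ℝ and define, on symmetric positive definite 3×3 matrices C, the second Piola–Kirchhoff stress of Becker's law S₂(C) = ( G·log(C) + (Λ/2)·tr(log C)·1 ) · C^(−1/2). Then S₂(1) = 0 and S₂ is Fréchet differentiable at C = 1 with derivative H ↦ G·H + (Λ/2)·tr(H)·1; equivalently, writing E = (C − 1)/2, one has S₂ = 2G·E + Λ·tr(E)·1 + o(‖E‖) as C → 1, so Becker's law is consistent with linear isotropic elasticity with Lamé constants G and Λ. -/

import Mathlib

open Matrix

attribute [local instance]
  Matrix.frobeniusNormedAddCommGroup Matrix.frobeniusNormedSpace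

namespace BeckerAux

lemma log_bounds {t : ℝ} (ht : 1/2 ≤ t) : |Real.log t - (t-1)| ≤ 2*(t-1)^2 := by
  have ht0 : (0:ℝ) < t := by linarith
  have h1 : Real.log t ≤ t - 1 := Real.log_le_sub_one_of_pos ht0
  have h2 : Real.log t⁻¹ ≤ t⁻¹ - 1 := Real.log_le_sub_one_of_pos (by positivity)
  rw [Real.log_inv] at h2
  have h3 : t * t⁻¹ = 1 := mul_inv_cancel₀ ht0.ne'
  rw [abs_le]
  constructor <;> nlinarith

lemma sqrt_ge {t : ℝ} (ht : 1/2 ≤ t) : 2/3 ≤ Real.sqrt t := by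
  have : ((2:ℝ)/3)^2 ≤ t := by nlinarith
  nlinarith [Real.sq_sqrt (by linarith : (0:ℝ) ≤ t), Real.sqrt_nonneg t,
    Real.sqrt_le_sqrt this, Real.sqrt_sq (by norm_num : ((0:ℝ) ≤ 2/3))]

lemma invsqrt_le {t : ℝ} (ht : 1/2 ≤ t) : (Real.sqrt t)⁻¹ ≤ 3/2 := by
  have h := sqrt_ge ht
  rw [inv_le_comm₀ (by linarith) (by norm_num)]
  linarith

lemma invsqrt_bound {t : ℝ} (ht : 1/2 ≤ t) : |(Real.sqrt t)⁻¹ - 1| ≤ |t - 1| := by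
  have hs := sqrt_ge ht
  have hs0 : (0:ℝ) < Real.sqrt t := by linarith
  have hsq : Real.sqrt t ^ 2 = t := Real.sq_sqrt (by linarith)
  have hinv : Real.sqrt t * (Real.sqrt t)⁻¹ = 1 := mul_inv_cancel₀ hs0.ne'
  rcases le_or_gt 1 t with h | h
  · have h1 : Real.sqrt t ≥ 1 := by nlinarith
    rw [abs_of_nonpos (by nlinarith [inv_nonneg.mpr hs0.le] : (Real.sqrt t)⁻¹ - 1 ≤ 0),
      abs_of_nonneg (by linarith)]
    nlinarith [inv_nonneg.mpr hs0.le]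
  · have h1 : Real.sqrt t ≤ 1 := by nlinarith
    rw [abs_of_nonneg (by nlinarith [inv_nonneg.mpr hs0.le] : (0:ℝ) ≤ (Real.sqrt t)⁻¹ - 1),
      abs_of_nonpos (by linarith)]
    nlinarith [inv_nonneg.mpr hs0.le]

lemma pointwise (G Lam S T ε t : ℝ) (hε0 : 0 ≤ ε) (hε : ε ≤ 1/2)
    (ht : |t - 1| ≤ ε) (hS : |S - T| ≤ 2*ε^2) (hT : |T| ≤ 3*ε) :
    |(G * Real.log t + Lam/2 * S) * (Real.sqrt t)⁻¹ - (G * (t-1) + Lam/2 * T)|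
      ≤ (4*|G| + 3*|Lam|) * ε^2 := by
  have ht2 : 1/2 ≤ t := by
    have := abs_le.mp ht; linarith
  set r := (Real.sqrt t)⁻¹ with hr
  have hrle : r ≤ 3/2 := invsqrt_le ht2
  have hr0 : 0 ≤ r := inv_nonneg.mpr (Real.sqrt_nonneg t)
  have hr1 : |r - 1| ≤ ε := (invsqrt_bound ht2).trans ht
  have hlog : |Real.log t - (t-1)| ≤ 2*ε^2 := by
    refine (log_bounds ht2).trans ?_
    have : (t-1)^2 ≤ ε^2 := by nlinarith [abs_nonneg (t-1), sq_abs (t-1)]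
    linarith
  have key : (G * Real.log t + Lam/2 * S) * r - (G * (t-1) + Lam/2 * T)
      = G * ((Real.log t - (t-1)) * r + (t-1) * (r-1))
        + Lam/2 * ((S - T) * r + T * (r-1)) := by ring
  rw [key]
  calc |G * ((Real.log t - (t-1)) * r + (t-1) * (r-1))
        + Lam/2 * ((S - T) * r + T * (r-1))|
      ≤ |G| * (|Real.log t - (t-1)| * r + |t-1| * |r-1|)
        + |Lam|/2 * (|S - T| * r + |T| * |r-1|) := by
        refine (abs_add_le _ _).trans (add_le_add ?_ ?_)
        · rw [abs_mul]
          gcongr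
          refine (abs_add_le _ _).trans ?_
          rw [abs_mul, abs_mul, abs_of_nonneg hr0]
        · rw [abs_mul, abs_div, abs_two]
          gcongr
          refine (abs_add_le _ _).trans ?_
          rw [abs_mul, abs_mul, abs_of_nonneg hr0]
    _ ≤ (4*|G| + 3*|Lam|) * ε^2 := by
        have h1 : |Real.log t - (t-1)| * r + |t-1| * |r-1| ≤ 4 * ε^2 := by
          nlinarith [abs_nonneg (Real.log t - (t-1)), abs_nonneg (t-1), abs_nonneg (r-1)]
        have h2 : |S - T| * r + |T| * |r-1| ≤ 6 * ε^2 := by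
          nlinarith [abs_nonneg (S-T), abs_nonneg T, abs_nonneg (r-1)]
        nlinarith [abs_nonneg G, abs_nonneg Lam]

variable {A : Matrix (Fin 3) (Fin 3) ℝ} (hA : A.IsHermitian)

local notation "U" => (hA.eigenvectorUnitary : Matrix (Fin 3) (Fin 3) ℝ)

lemma rep (f : ℝ → ℝ) : hA.cfc f = U * diagonal (fun i => f (hA.eigenvalues i)) * star U := by
  simp [Matrix.IsHermitian.cfc, Function.comp_def]

lemma star_mul_self' : star U * U = 1 := Unitary.star_mul_self_of_mem (SetLike.coe_mem _)
lemma mul_star_self' : U * star U = 1 := Unitary.mul_star_self_of_mem (SetLike.coe_mem _)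

lemma mulCfc (f g : ℝ → ℝ) : hA.cfc f * hA.cfc g = hA.cfc (fun t => f t * g t) := by
  rw [rep, rep, rep]
  have : ∀ D₁ D₂ : Matrix (Fin 3) (Fin 3) ℝ,
      U * D₁ * star U * (U * D₂ * star U) = U * (D₁ * (star U * U) * D₂) * star U := by
    intros; simp only [mul_assoc]
  rw [this, star_mul_self', mul_one, diagonal_mul_diagonal]

lemma addCfc (f g : ℝ → ℝ) : hA.cfc f + hA.cfc g = hA.cfc (fun t => f t + g t) := by
  rw [rep, rep, rep, ← add_mul, ← mul_add]
  congr 2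
  rw [diagonal_add]

lemma smulCfc (c : ℝ) (f : ℝ → ℝ) : c • hA.cfc f = hA.cfc (fun t => c * f t) := by
  rw [rep, rep, ← smul_mul_assoc, ← mul_smul_comm]
  congr 2
  rw [← diagonal_smul]
  congr 1

lemma idCfc : hA.cfc (fun t => t) = A := by
  conv_rhs => rw [hA.spectral_theorem]
  rw [rep]
  congr 1

lemma oneCfc : hA.cfc (fun _ => 1) = 1 := by
  rw [rep]
  have : diagonal (fun _ : Fin 3 => (1:ℝ)) = 1 := diagonal_one
  rw [this, mul_one, mul_star_self']

lemma subCfc (f g : ℝ → ℝ) : hA.cfc f - hA.cfc g = hA.cfc (fun t => f t - g t) := by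
  rw [sub_eq_add_neg, ← neg_one_smul ℝ (hA.cfc g), smulCfc, addCfc]
  exact congrArg hA.cfc (funext fun t => by ring)

lemma traceCfc (f : ℝ → ℝ) : (hA.cfc f).trace = ∑ i, f (hA.eigenvalues i) := by
  rw [rep, Matrix.trace_mul_cycle, star_mul_self', one_mul, trace_diagonal]

lemma frob_sq (M : Matrix (Fin 3) (Fin 3) ℝ) : ‖M‖^2 = (Mᵀ * M).trace := by
  rw [Matrix.frobenius_norm_def, ← Real.rpow_natCast _ 2, ← Real.rpow_mul (by positivity)]
  norm_num
  rw [Matrix.trace, Finset.sum_comm]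
  congr 1 with i
  rw [Matrix.diag, Matrix.mul_apply]
  congr 1 with j
  simp [Matrix.transpose_apply, Real.norm_eq_abs, sq_abs, sq]

lemma transposeCfc (f : ℝ → ℝ) : (hA.cfc f)ᵀ = hA.cfc f := by
  have h : IsHermitian (hA.cfc f) := by
    rw [rep]
    have hd := Matrix.isHermitian_mul_mul_conjTranspose U
      (Matrix.isHermitian_diagonal (fun i => f (hA.eigenvalues i)))
    simpa [Matrix.star_eq_conjTranspose] using hd
  rw [← Matrix.conjTranspose_eq_transpose_of_trivial]; exact h

lemma normCfc (f : ℝ → ℝ) : ‖hA.cfc f‖ = Real.sqrt (∑ i, (f (hA.eigenvalues i))^2) := by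
  have h2 : ‖hA.cfc f‖^2 = ∑ i, (f (hA.eigenvalues i))^2 := by
    rw [frob_sq, transposeCfc hA, mulCfc hA, traceCfc hA]
    simp [sq]
  rw [← Real.sqrt_sq (norm_nonneg _), h2]

end BeckerAux

/-- The principal matrix logarithm of a symmetric (positive definite) matrix, obtained by
applying the real logarithm to the eigenvalues in a spectral decomposition (junk value `0`
on non-Hermitian input). -/
noncomputable def matLog (A : Matrix (Fin 3) (Fin 3) ℝ) : Matrix (Fin 3) (Fin 3) ℝ :=
  if hA : A.IsHermitian then hA.cfc Real.log else 0

/-- `C^(−1/2)`: the inverse of the unique symmetric positive definite square root of `C`,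
obtained by applying `t ↦ (√t)⁻¹` to the eigenvalues in a spectral decomposition (junk
value `0` on non-Hermitian input). -/
noncomputable def matInvSqrt (A : Matrix (Fin 3) (Fin 3) ℝ) : Matrix (Fin 3) (Fin 3) ℝ :=
  if hA : A.IsHermitian then hA.cfc (fun t => (Real.sqrt t)⁻¹) else 0

/-- The second Piola–Kirchhoff stress of Becker's law:
`S₂(C) = (G·log C + (Λ/2)·tr(log C)·1)·C^(−1/2)`. -/
noncomputable def beckerS2 (G Lam : ℝ) (C : Matrix (Fin 3) (Fin 3) ℝ) :
    Matrix (Fin 3) (Fin 3) ℝ :=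
  (G • matLog C + ((Lam / 2) * (matLog C).trace) • 1) * matInvSqrt C

namespace BeckerAux

/-- The key quantitative estimate. -/
lemma key (G Lam : ℝ) {C : Matrix (Fin 3) (Fin 3) ℝ} (hH : C.IsHermitian)
    (hε : ‖C - 1‖ ≤ 1/2) :
    ‖beckerS2 G Lam C - (G • (C - 1) + (Lam / 2 * (C - 1).trace) • 1)‖
      ≤ (8*|G| + 6*|Lam|) * ‖C - 1‖^2 := by
  set ε := ‖C - 1‖ with hεdef
  have hε0 : 0 ≤ ε := norm_nonneg _
  have hsub : C - 1 = hH.cfc (fun t => t - 1) := by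
    conv_lhs => rw [← idCfc hH, ← oneCfc hH]
    rw [subCfc]
  have hnorm1 : ε = Real.sqrt (∑ i, (hH.eigenvalues i - 1)^2) := by
    rw [hεdef, hsub, normCfc]
  have hsum : ∑ i, (hH.eigenvalues i - 1)^2 = ε^2 := by
    rw [hnorm1, Real.sq_sqrt (by positivity)]
  have heig : ∀ i, |hH.eigenvalues i - 1| ≤ ε := by
    intro i
    have h1 : (hH.eigenvalues i - 1)^2 ≤ ε^2 := by
      rw [← hsum]
      exact Finset.single_le_sum (f := fun j => (hH.eigenvalues j - 1)^2)
        (fun j _ => sq_nonneg _) (Finset.mem_univ i)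
    calc |hH.eigenvalues i - 1| = Real.sqrt ((hH.eigenvalues i - 1)^2) :=
          (Real.sqrt_sq_eq_abs _).symm
      _ ≤ Real.sqrt (ε^2) := Real.sqrt_le_sqrt h1
      _ = ε := Real.sqrt_sq hε0
  have heig2 : ∀ i, 1/2 ≤ hH.eigenvalues i := by
    intro i
    have := abs_le.mp (heig i)
    linarith
  set S := ∑ i, Real.log (hH.eigenvalues i) with hSdef
  set T := ∑ i, (hH.eigenvalues i - 1) with hTdef
  have hTr : (C - 1).trace = T := by rw [hsub, traceCfc]
  have hlogC : matLog C = hH.cfc Real.log := by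
    rw [matLog, dif_pos hH]
  have hinvC : matInvSqrt C = hH.cfc (fun t => (Real.sqrt t)⁻¹) := by
    rw [matInvSqrt, dif_pos hH]
  have hSt : (matLog C).trace = S := by rw [hlogC, traceCfc]
  have hbeck : beckerS2 G Lam C
      = hH.cfc (fun t => (G * Real.log t + Lam/2 * S) * (Real.sqrt t)⁻¹) := by
    rw [beckerS2, hSt, hlogC, hinvC, smulCfc, ← oneCfc hH, smulCfc, addCfc, mulCfc]
    exact congrArg hH.cfc (funext fun t => by ring)
  have hLv : G • (C - 1) + (Lam / 2 * (C - 1).trace) • 1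
      = hH.cfc (fun t => G * (t - 1) + Lam/2 * T) := by
    rw [hTr, hsub, smulCfc, ← oneCfc hH, smulCfc, addCfc]
    exact congrArg hH.cfc (funext fun t => by ring)
  rw [hbeck, hLv, subCfc, normCfc]
  -- bounds on S - T and T
  have hSb : |S - T| ≤ 2 * ε^2 := by
    have h1 : S - T = ∑ i, (Real.log (hH.eigenvalues i) - (hH.eigenvalues i - 1)) := by
      rw [hSdef, hTdef, ← Finset.sum_sub_distrib]
    rw [h1]
    calc |∑ i, (Real.log (hH.eigenvalues i) - (hH.eigenvalues i - 1))|
        ≤ ∑ i, |Real.log (hH.eigenvalues i) - (hH.eigenvalues i - 1)| :=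
          Finset.abs_sum_le_sum_abs _ _
      _ ≤ ∑ i, 2*(hH.eigenvalues i - 1)^2 :=
          Finset.sum_le_sum (fun i _ => log_bounds (heig2 i))
      _ = 2 * ε^2 := by rw [← Finset.mul_sum, hsum]
  have hTb : |T| ≤ 3 * ε := by
    calc |T| ≤ ∑ i, |hH.eigenvalues i - 1| := Finset.abs_sum_le_sum_abs _ _
      _ ≤ ∑ _i : Fin 3, ε := Finset.sum_le_sum (fun i _ => heig i)
      _ = 3 * ε := by simp [Finset.sum_const]
  set M := (4*|G| + 3*|Lam|) * ε^2 with hMdef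
  have hM0 : 0 ≤ M := by positivity
  have hpt : ∀ i : Fin 3,
      ((fun t => (G * Real.log t + Lam/2 * S) * (Real.sqrt t)⁻¹ - (G * (t - 1) + Lam/2 * T))
        (hH.eigenvalues i))^2 ≤ M^2 := by
    intro i
    have h := pointwise G Lam S T ε (hH.eigenvalues i) hε0 hε (heig i) hSb hTb
    rw [← sq_abs]
    exact pow_le_pow_left₀ (abs_nonneg _) h 2
  calc Real.sqrt (∑ i, ((fun t => (G * Real.log t + Lam/2 * S) * (Real.sqrt t)⁻¹
          - (G * (t - 1) + Lam/2 * T)) (hH.eigenvalues i))^2)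
      ≤ Real.sqrt (∑ _i : Fin 3, M^2) :=
        Real.sqrt_le_sqrt (Finset.sum_le_sum (fun i _ => hpt i))
    _ ≤ Real.sqrt ((2*M)^2) := by
        apply Real.sqrt_le_sqrt
        simp [Finset.sum_const]
        nlinarith
    _ = 2 * M := Real.sqrt_sq (by positivity)
    _ = (8*|G| + 6*|Lam|) * ε^2 := by rw [hMdef]; ring

lemma eigenvalues_one (h1 : (1 : Matrix (Fin 3) (Fin 3) ℝ).IsHermitian) (i : Fin 3) :
    h1.eigenvalues i = 1 := by
  have hst := h1.spectral_theorem
  simp only [Unitary.conjStarAlgAut_apply] at hst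
  have hD : diagonal (RCLike.ofReal ∘ h1.eigenvalues) = (1 : Matrix (Fin 3) (Fin 3) ℝ) := by
    have := congrArg (fun M => (star (h1.eigenvectorUnitary : Matrix (Fin 3) (Fin 3) ℝ)) * M *
      (h1.eigenvectorUnitary : Matrix (Fin 3) (Fin 3) ℝ)) hst
    simp only [mul_assoc] at this
    rw [star_mul_self' h1] at this
    clear this
    calc diagonal (RCLike.ofReal ∘ h1.eigenvalues)
        = (star (h1.eigenvectorUnitary : Matrix (Fin 3) (Fin 3) ℝ)
            * (h1.eigenvectorUnitary : Matrix (Fin 3) (Fin 3) ℝ))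
          * diagonal (RCLike.ofReal ∘ h1.eigenvalues)
          * (star (h1.eigenvectorUnitary : Matrix (Fin 3) (Fin 3) ℝ)
            * (h1.eigenvectorUnitary : Matrix (Fin 3) (Fin 3) ℝ)) := by
          rw [star_mul_self' h1, one_mul, mul_one]
      _ = star (h1.eigenvectorUnitary : Matrix (Fin 3) (Fin 3) ℝ)
          * ((h1.eigenvectorUnitary : Matrix (Fin 3) (Fin 3) ℝ)
            * diagonal (RCLike.ofReal ∘ h1.eigenvalues)
            * star (h1.eigenvectorUnitary : Matrix (Fin 3) (Fin 3) ℝ))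
          * (h1.eigenvectorUnitary : Matrix (Fin 3) (Fin 3) ℝ) := by
          simp only [mul_assoc]
      _ = star (h1.eigenvectorUnitary : Matrix (Fin 3) (Fin 3) ℝ) * (1 : Matrix (Fin 3) (Fin 3) ℝ)
          * (h1.eigenvectorUnitary : Matrix (Fin 3) (Fin 3) ℝ) := by rw [← hst]
      _ = 1 := by rw [mul_one, star_mul_self' h1]
  have := congrFun (congrFun hD i) i
  simpa using this

end BeckerAux

/-- For all `G, Λ`, Becker's second Piola–Kirchhoff stress
`S₂(C) = (G·log C + (Λ/2)·tr(log C)·1)·C^(−1/2)` satisfies `S₂(1) = 0` and is Fréchet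
differentiable at `C = 1` (within the symmetric positive definite matrices, with respect
to the Frobenius norm) with derivative `H ↦ G·H + (Λ/2)·tr(H)·1`; i.e. Becker's law is
consistent with linear isotropic elasticity with Lamé constants `G` and `Λ`. -/
theorem becker_consistent_with_linear_elasticity (G Lam : ℝ) :
    beckerS2 G Lam 1 = 0
    ∧ ∃ L : Matrix (Fin 3) (Fin 3) ℝ →L[ℝ] Matrix (Fin 3) (Fin 3) ℝ,
        (∀ H : Matrix (Fin 3) (Fin 3) ℝ, L H = G • H + ((Lam / 2) * H.trace) • 1) ∧
        HasFDerivWithinAt (beckerS2 G Lam) L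
          {C : Matrix (Fin 3) (Fin 3) ℝ | C.PosDef} 1 := by
  have h1 : (1 : Matrix (Fin 3) (Fin 3) ℝ).IsHermitian := Matrix.isHermitian_one
  have hlog1 : matLog 1 = 0 := by
    rw [matLog, dif_pos h1, BeckerAux.rep]
    have hz : (fun i => Real.log (h1.eigenvalues i)) = fun _ => (0:ℝ) :=
      funext fun i => by rw [BeckerAux.eigenvalues_one h1 i, Real.log_one]
    rw [hz, Matrix.diagonal_zero, Matrix.mul_zero, Matrix.zero_mul]
  have hS20 : beckerS2 G Lam 1 = 0 := by
    simp [beckerS2, hlog1]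
  refine ⟨hS20, ?_⟩
  -- the linear map
  set K := 8*|G| + 6*|Lam| + 1 with hKdef
  have hK0 : 0 < K := by positivity
  let Llin : Matrix (Fin 3) (Fin 3) ℝ →ₗ[ℝ] Matrix (Fin 3) (Fin 3) ℝ :=
    { toFun := fun H => G • H + ((Lam / 2) * H.trace) • 1
      map_add' := by
        intro x y
        simp only [Matrix.trace_add, smul_add, mul_add, add_smul]
        abel
      map_smul' := by
        intro c x
        simp only [Matrix.trace_smul, smul_eq_mul, RingHom.id_apply, smul_add, smul_smul]
        congr 1
        · rw [mul_comm]
        · congr 1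
          ring }
  refine ⟨LinearMap.toContinuousLinearMap Llin, fun H => rfl, ?_⟩
  refine hasFDerivWithinAt_iff_isLittleO.mpr ?_
  rw [Asymptotics.isLittleO_iff]
  intro c hc
  rw [eventually_nhdsWithin_iff, Metric.eventually_nhds_iff]
  refine ⟨min (1/2) (c / K), by positivity, ?_⟩
  intro x hdist hx
  have hxH : x.IsHermitian := hx.1
  rw [dist_eq_norm] at hdist
  have hd1 : ‖x - 1‖ ≤ 1/2 := le_of_lt (lt_of_lt_of_le hdist (min_le_left _ _))
  have hd2 : ‖x - 1‖ < c / K := lt_of_lt_of_le hdist (min_le_right _ _)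
  have hkey := BeckerAux.key G Lam hxH hd1
  have hLx : (LinearMap.toContinuousLinearMap Llin : Matrix (Fin 3) (Fin 3) ℝ →L[ℝ]
      Matrix (Fin 3) (Fin 3) ℝ) (x - 1) = G • (x - 1) + (Lam / 2 * (x - 1).trace) • 1 := rfl
  rw [hS20, sub_zero]
  calc ‖beckerS2 G Lam x - (G • (x - 1) + (Lam / 2 * (x - 1).trace) • 1)‖
      ≤ (8*|G| + 6*|Lam|) * ‖x - 1‖^2 := hkey
    _ ≤ c * ‖x - 1‖ := by
        have hn0 : (0:ℝ) ≤ ‖x - 1‖ := norm_nonneg _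
        have : (8*|G| + 6*|Lam|) * ‖x - 1‖ ≤ c := by
          have h1' : K * ‖x - 1‖ ≤ c := by
            rw [← le_div_iff₀' hK0]
            exact le_of_lt hd2
          nlinarith
        nlinarith
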